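/- arXiv:2204.13089 — 3 statements merged into one kernel-verified Lean document; each statement's English description precedes it below -/
import Mathlib

section
/- Let n ≥ 2, let d ∈ ℝⁿ have all entries positive and set D = diag(d), let R > 0, and let the random vector x ∈ ℝⁿ be distributed according to the multivariate Gaussian distribution N(x̄, Σ_x) with Σ_x symmetric positive definite. Then almost surely (over x) the following holds: every diagonal matrix D' satisfying D − (D x xᵀ D)/(xᵀ D x + R) ⪯ D' ⪯ D must equal D. (Theorem 1: for parameter estimation with a nondegenerate Gaussian input vector, the conservative sandwiching constraint P_KF ⪯ P_t ⪯ P_{t−1} on diagonal covariances almost surely forces P_t = P_{t−1}.) -/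
open Matrix MeasureTheory

/-- Density of the multivariate Gaussian `N(m, S)` on `ℝⁿ` with respect to
Lebesgue measure. -/
noncomputable def gaussianPdf {n : ℕ} (m : Fin n → ℝ) (S : Matrix (Fin n) (Fin n) ℝ)
    (x : Fin n → ℝ) : ℝ :=
  (2 * Real.pi) ^ (-(n : ℝ) / 2) * S.det ^ (-(1 : ℝ) / 2) *
    Real.exp (-(1 / 2) * ((x - m) ⬝ᵥ (S⁻¹ *ᵥ (x - m))))

/-- **Theorem 1.** For parameter estimation with a nondegenerate Gaussian input
vector `x ~ N(x̄, Sx)`, almost surely any diagonal matrix `D'` sandwiched between the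
Kalman posterior covariance `D − (D x xᵀ D)/(xᵀ D x + R)` and the prior `D = diag d`
must equal `D`. -/
theorem diagonal_sandwich_forces_eq_almost_surely
    (n : ℕ) (hn : 2 ≤ n) (d : Fin n → ℝ) (hd : ∀ i, 0 < d i)
    (R : ℝ) (hR : 0 < R)
    (xbar : Fin n → ℝ) (Sx : Matrix (Fin n) (Fin n) ℝ) (hSx : Sx.PosDef) :
    ∀ᵐ x ∂(volume.withDensity fun x => ENNReal.ofReal (gaussianPdf xbar Sx x)),
      ∀ d' : Fin n → ℝ,
        (Matrix.diagonal d' -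
            (Matrix.diagonal d -
              (x ⬝ᵥ (Matrix.diagonal d *ᵥ x) + R)⁻¹ •
                (Matrix.diagonal d * vecMulVec x x * Matrix.diagonal d))).PosSemidef →
        (Matrix.diagonal d - Matrix.diagonal d').PosSemidef →
        Matrix.diagonal d' = Matrix.diagonal d := by
  have habs : (volume.withDensity fun x => ENNReal.ofReal (gaussianPdf xbar Sx x)) ≪
      (volume : Measure (Fin n → ℝ)) := withDensity_absolutelyContinuous _ _
  have hae : ∀ᵐ x : Fin n → ℝ ∂volume, ∀ j, x j ≠ 0 := by
    rw [ae_all_iff]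
    intro j
    rw [MeasureTheory.volume_pi]
    exact Measure.ae_eval_ne _ j 0
  refine (hae.filter_mono habs.ae_le).mono ?_
  intro x hx d' h1 h2
  -- entrywise nonnegativity from h2
  have hle : ∀ i, d' i ≤ d i := by
    intro i
    have := h2.dotProduct_mulVec_nonneg (Pi.single i 1)
    simp [Matrix.sub_mulVec, Matrix.mulVec_single, dotProduct_sub,
      dotProduct_single, single_dotProduct, Matrix.diagonal_apply_eq] at this
    linarith
  set s : ℝ := x ⬝ᵥ (Matrix.diagonal d *ᵥ x) + R with hs
  have hs0 : 0 < s := by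
    have : 0 ≤ x ⬝ᵥ (Matrix.diagonal d *ᵥ x) := by
      rw [dotProduct]
      apply Finset.sum_nonneg
      intro k _
      rw [Matrix.mulVec_diagonal]
      nlinarith [(hd k).le, sq_nonneg (x k)]
    linarith
  have hge : ∀ i, d i ≤ d' i := by
    intro i
    haveI : Nontrivial (Fin n) := ⟨⟨⟨0, by omega⟩, ⟨1, by omega⟩, by simp [Fin.ext_iff]⟩⟩
    obtain ⟨j, hj⟩ := exists_ne i
    set a : ℝ := d j * x j with ha
    set b : ℝ := -(d i * x i) with hb
    set v : Fin n → ℝ := Pi.single i a + Pi.single j b with hv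
    have key := h1.dotProduct_mulVec_nonneg v
    set A := (Matrix.diagonal d' -
            (Matrix.diagonal d - s⁻¹ •
                (Matrix.diagonal d * vecMulVec x x * Matrix.diagonal d))) with hA
    have hAent : ∀ k l, A k l = (if k = l then d' k - d k else 0)
        + s⁻¹ * (d k * (x k * x l) * d l) := by
      intro k l
      simp [hA, Matrix.sub_apply, Matrix.smul_apply, Matrix.diagonal_apply,
        Matrix.diagonal_mul, Matrix.mul_diagonal, Matrix.vecMulVec_apply, smul_eq_mul]
      split <;> ring
    have hQ : v ⬝ᵥ (A *ᵥ v) = a * (A i i * a + A i j * b) + b * (A j i * a + A j j * b) := by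
      rw [hv, Matrix.mulVec_add, Matrix.mulVec_single, Matrix.mulVec_single]
      simp [add_dotProduct, single_dotProduct]
      ring
    rw [star_trivial] at key
    rw [hQ] at key
    rw [hAent i i, hAent i j, hAent j i, hAent j j] at key
    simp only [if_pos rfl, if_neg hj.symm, if_neg hj, if_true, zero_add] at key
    have hexp : a * ((d' i - d i + s⁻¹ * (d i * (x i * x i) * d i)) * a
        + s⁻¹ * (d i * (x i * x j) * d j) * b)
        + b * (s⁻¹ * (d j * (x j * x i) * d i) * a
        + (d' j - d j + s⁻¹ * (d j * (x j * x j) * d j)) * b)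
        = (d j * x j)^2 * (d' i - d i) + (d i * x i)^2 * (d' j - d j) := by
      rw [ha, hb]; ring
    rw [hexp] at key
    have hne : d j * x j ≠ 0 := mul_ne_zero (hd j).ne' (hx j)
    have haj : (d j * x j)^2 > 0 := by positivity
    nlinarith [hle j, sq_nonneg (d i * x i)]
  have : d' = d := funext fun i => le_antisymm (hle i) (hge i)
  rw [this]
end

section
/- Let n ∈ ℕ, x ∈ ℝⁿ, R > 0, let d, d' ∈ ℝⁿ with d having nonnegative entries, and set D = diag(d), D' = diag(d'). Suppose D − (D x xᵀ D)/(xᵀ D x + R) ⪯ D' ⪯ D. If there exists a vector u ∈ ℝⁿ with every coordinate nonzero such that uᵀ D x = 0, then D' = D. (Deterministic core of Theorem 1.) -/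
open Matrix

/-- Deterministic core of Theorem 1: if `D' = diag d'` is sandwiched between the
Kalman posterior covariance `D − (D x xᵀ D)/(xᵀ D x + R)` and the prior `D = diag d`
(with `d` nonnegative), and there is a vector `u` with all nonzero coordinates
orthogonal to `D x`, then `D' = D`. -/
theorem diagonal_sandwich_forces_eq
    (n : ℕ) (x : Fin n → ℝ) (R : ℝ) (hR : 0 < R)
    (d d' : Fin n → ℝ) (hd : ∀ i, 0 ≤ d i)
    (h1 : (Matrix.diagonal d' -
            (Matrix.diagonal d -
              (x ⬝ᵥ (Matrix.diagonal d *ᵥ x) + R)⁻¹ •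
                (Matrix.diagonal d * vecMulVec x x * Matrix.diagonal d))).PosSemidef)
    (h2 : (Matrix.diagonal d - Matrix.diagonal d').PosSemidef)
    (hu : ∃ u : Fin n → ℝ, (∀ i, u i ≠ 0) ∧ u ⬝ᵥ (Matrix.diagonal d *ᵥ x) = 0) :
    Matrix.diagonal d' = Matrix.diagonal d := by
  obtain ⟨u, hu0, hux⟩ := hu
  set c : ℝ := (x ⬝ᵥ (Matrix.diagonal d *ᵥ x) + R)⁻¹ with hc
  set v : Fin n → ℝ := Matrix.diagonal d *ᵥ x with hv
  -- the rank-one matrix is vecMulVec v v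
  have hMeq : Matrix.diagonal d * vecMulVec x x * Matrix.diagonal d
      = vecMulVec v v := by
    ext i j
    simp [Matrix.mul_apply, vecMulVec_apply, Matrix.diagonal, Matrix.mulVec,
      dotProduct, Finset.mul_sum, Finset.sum_mul, hv, mul_comm, mul_left_comm]
  have hMquad : u ⬝ᵥ ((Matrix.diagonal d * vecMulVec x x * Matrix.diagonal d) *ᵥ u) = 0 := by
    rw [hMeq]
    have : vecMulVec v v *ᵥ u = (v ⬝ᵥ u) • v := by
      ext i; simp [vecMulVec_apply, Matrix.mulVec, dotProduct, Finset.mul_sum,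
        mul_comm, mul_left_comm]
    rw [this, dotProduct_comm v u] at *
    rw [hux]
    simp
  have q1 := h1.dotProduct_mulVec_nonneg u
  have q2 := h2.dotProduct_mulVec_nonneg u
  simp only [star_trivial] at q1 q2
  rw [Matrix.sub_mulVec, Matrix.sub_mulVec, Matrix.smul_mulVec,
      dotProduct_sub, dotProduct_sub, dotProduct_smul, hMquad] at q1
  rw [Matrix.sub_mulVec, dotProduct_sub] at q2
  have hzero : u ⬝ᵥ (Matrix.diagonal d *ᵥ u) - u ⬝ᵥ (Matrix.diagonal d' *ᵥ u) = 0 := by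
    simp only [smul_eq_mul, mul_zero] at q1
    linarith
  have hsum : ∑ i, (d i - d' i) * (u i * u i) = 0 := by
    have : u ⬝ᵥ (Matrix.diagonal d *ᵥ u) - u ⬝ᵥ (Matrix.diagonal d' *ᵥ u)
        = ∑ i, (d i - d' i) * (u i * u i) := by
      simp only [Matrix.mulVec_diagonal, dotProduct, ← Finset.sum_sub_distrib]
      exact Finset.sum_congr rfl fun i _ => by ring
    rw [this] at hzero
    exact hzero
  have hnn : ∀ i, 0 ≤ (d i - d' i) * (u i * u i) := by
    intro i
    have hdi : 0 ≤ d i - d' i := by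
      have := h2.dotProduct_mulVec_nonneg (Pi.single i 1)
      simpa [Matrix.sub_mulVec, dotProduct_sub, Matrix.mulVec_diagonal,
        dotProduct, Pi.single_apply] using this
    exact mul_nonneg hdi (mul_self_nonneg _)
  have hall : ∀ i ∈ Finset.univ, (d i - d' i) * (u i * u i) = 0 :=
    (Finset.sum_eq_zero_iff_of_nonneg (fun i _ => hnn i)).1 hsum
  have hdd : d' = d := by
    funext i
    have := hall i (Finset.mem_univ i)
    rcases mul_eq_zero.1 this with h | h
    · linarith
    · exact absurd (mul_self_eq_zero.1 h) (hu0 i)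
  rw [hdd]
end

section
/- Let p = N(θ; μ, Σ_p) and q = N(θ; μ, Σ_q) be Gaussian densities on ℝⁿ with the same mean μ and symmetric positive definite covariances, and set M = Σ_q⁻¹ Σ_p. Then the squared-log-ratio integral (the L² information pseudometric squared) satisfies ∫ p(θ) |log(p(θ)/q(θ))|² dθ = n/2 − tr(M) + tr(M²)/2 + (1/4)( tr(M) − log det M − n )². -/
open Matrix MeasureTheory

namespace GaussL2Aux

open Real

lemma twoPiPos : (0:ℝ) < 2 * π := by positivity

/-! ### One-dimensional Gaussian moments -/

lemma integrable_pow_mul_gauss (k : ℕ) :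
    Integrable (fun t : ℝ => t ^ k * Real.exp (-(1/2) * t ^ 2)) := by
  have := integrable_rpow_mul_exp_neg_mul_sq (b := 1/2) (by norm_num)
    (s := (k : ℝ)) (lt_of_lt_of_le (by norm_num) (Nat.cast_nonneg k))
  simpa [Real.rpow_natCast] using this

lemma gauss_moment_rec (k : ℕ) :
    ∫ t : ℝ, t ^ (k + 2) * Real.exp (-(1/2) * t ^ 2)
      = (k + 1 : ℝ) * ∫ t : ℝ, t ^ k * Real.exp (-(1/2) * t ^ 2) := by
  set D : ℝ → ℝ := fun t => (k + 1 : ℝ) * (t ^ k * Real.exp (-(1/2) * t ^ 2))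
      - t ^ (k + 2) * Real.exp (-(1/2) * t ^ 2) with hD
  have hderiv : ∀ t : ℝ, HasDerivAt (fun t : ℝ => t ^ (k+1) * Real.exp (-(1/2) * t ^ 2)) (D t) t := by
    intro t
    have h1 : HasDerivAt (fun t : ℝ => t ^ (k+1)) ((k+1 : ℕ) * t ^ k) t := by
      simpa using hasDerivAt_pow (k+1) t
    have h2 : HasDerivAt (fun t : ℝ => Real.exp (-(1/2) * t ^ 2))
        (Real.exp (-(1/2) * t ^ 2) * (-(1/2) * (2 * t))) t := by
      exact (((hasDerivAt_pow 2 t).const_mul (-(1/2))).exp).congr_deriv (by push_cast; ring)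
    have := h1.fun_mul h2
    refine this.congr_deriv ?_
    simp only [hD]
    push_cast
    ring
  have hint : Integrable D := by
    have h1 := (integrable_pow_mul_gauss k).const_mul (k+1 : ℝ)
    exact h1.sub (integrable_pow_mul_gauss (k+2))
  have hf : Integrable (fun t : ℝ => t ^ (k+1) * Real.exp (-(1/2) * t ^ 2)) :=
    integrable_pow_mul_gauss (k+1)
  have h0 : ∫ t, D t = 0 := integral_eq_zero_of_hasDerivAt_of_integrable hderiv hint hf
  rw [hD] at h0
  rw [integral_sub ((integrable_pow_mul_gauss k).const_mul _) (integrable_pow_mul_gauss (k+2)),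
    MeasureTheory.integral_const_mul, sub_eq_zero] at h0
  rw [← h0]

lemma gauss_moment_zero : ∫ t : ℝ, t ^ 0 * Real.exp (-(1/2) * t ^ 2) = Real.sqrt (2 * π) := by
  simp only [pow_zero, one_mul]
  have h := integral_gaussian (1/2)
  rw [show π / (1/2 : ℝ) = 2 * π by ring] at h
  exact h

noncomputable def g1 (t : ℝ) : ℝ := (2 * π) ^ (-(1:ℝ)/2) * Real.exp (-(1/2) * t ^ 2)

lemma integrable_g1_pow (k : ℕ) : Integrable (fun t : ℝ => g1 t * t ^ k) := by
  have h := (integrable_pow_mul_gauss k).const_mul ((2 * π) ^ (-(1:ℝ)/2))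
  refine h.congr (Filter.Eventually.of_forall fun t => ?_)
  simp [g1]; ring

lemma g1_mom (k : ℕ) : ∫ t : ℝ, g1 t * t ^ k
    = (2 * π) ^ (-(1:ℝ)/2) * ∫ t : ℝ, t ^ k * Real.exp (-(1/2) * t ^ 2) := by
  rw [← MeasureTheory.integral_const_mul]
  congr 1 with t; simp [g1]; ring

lemma g1_mom0 : ∫ t : ℝ, g1 t * t ^ 0 = 1 := by
  rw [g1_mom, gauss_moment_zero, Real.sqrt_eq_rpow, ← Real.rpow_add twoPiPos]
  norm_num

lemma g1_int : ∫ t : ℝ, g1 t = 1 := by simpa using g1_mom0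

lemma g1_mom2 : ∫ t : ℝ, g1 t * t ^ 2 = 1 := by
  rw [g1_mom, gauss_moment_rec 0, ← mul_assoc, mul_comm ((2*π) ^ (-(1:ℝ)/2)) _, mul_assoc,
    ← g1_mom, g1_mom0]
  norm_num

lemma g1_mom4 : ∫ t : ℝ, g1 t * t ^ 4 = 3 := by
  rw [g1_mom, gauss_moment_rec 2, ← mul_assoc, mul_comm ((2*π) ^ (-(1:ℝ)/2)) _, mul_assoc,
    ← g1_mom, g1_mom2]
  norm_num

/-! ### Product integrals over `Fin n → ℝ` -/

noncomputable def HH {n : ℕ} (e : Fin n → ℕ) (z : Fin n → ℝ) : ℝ :=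
  ∏ i, (g1 (z i) * (z i) ^ (e i))

lemma HH_integrable {n : ℕ} (e : Fin n → ℕ) : Integrable (HH e) :=
  Integrable.fintype_prod (f := fun i t => g1 t * t ^ (e i)) fun i => integrable_g1_pow (e i)

lemma HH_integral {n : ℕ} (e : Fin n → ℕ) :
    ∫ z, HH e z = ∏ i, ∫ t : ℝ, g1 t * t ^ (e i) :=
  integral_fintype_prod_eq_prod (fun i t => g1 t * t ^ (e i))

lemma HH_single {n : ℕ} (i : Fin n) :
    ∫ z, HH (Pi.single i 2) z = 1 := by
  rw [HH_integral]
  apply Finset.prod_eq_one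
  intro k _
  rcases eq_or_ne k i with h | h
  · subst h; simp [Pi.single_eq_same, g1_mom2]
  · simp [Pi.single_eq_of_ne h, g1_int]

lemma HH_pair {n : ℕ} (i j : Fin n) :
    ∫ z, HH (Pi.single i 2 + Pi.single j 2) z = if i = j then 3 else 1 := by
  rw [HH_integral]
  rcases eq_or_ne i j with h | h
  · subst h; simp only [if_pos rfl]
    rw [Finset.prod_eq_single i]
    · simp [Pi.single_eq_same]; simpa using g1_mom4
    · intro k _ hk; simp [Pi.single_eq_of_ne hk, g1_int]
    · simp
  · rw [if_neg h]
    apply Finset.prod_eq_one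
    intro k _
    rcases eq_or_ne k i with hk | hk
    · subst hk; simp [Pi.single_eq_same, Pi.single_eq_of_ne (by exact h), g1_mom2]
    · rcases eq_or_ne k j with hk' | hk'
      · subst hk'; simp [Pi.single_eq_same, Pi.single_eq_of_ne hk, g1_mom2]
      · simp [Pi.single_eq_of_ne hk, Pi.single_eq_of_ne hk', g1_int]

lemma HH_zero_eq {n : ℕ} (z : Fin n → ℝ) :
    HH (0 : Fin n → ℕ) z = (2*π) ^ (-(n:ℝ)/2) * Real.exp (-(1/2) * (z ⬝ᵥ z)) := by
  unfold HH
  simp only [Pi.zero_apply, pow_zero, mul_one]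
  unfold g1
  rw [Finset.prod_mul_distrib, Finset.prod_const, Finset.card_univ, Fintype.card_fin,
    ← Real.exp_sum]
  congr 1
  · rw [← Real.rpow_natCast ((2*π) ^ (-(1:ℝ)/2)) n, ← Real.rpow_mul (le_of_lt (by positivity))]
    congr 1; ring
  · congr 1
    rw [dotProduct, Finset.mul_sum]
    exact Finset.sum_congr rfl fun i _ => by ring

lemma HH_monomial {n : ℕ} (e : Fin n → ℕ) (z : Fin n → ℝ) :
    HH e z = HH 0 z * ∏ i, (z i) ^ (e i) := by
  unfold HH
  rw [← Finset.prod_mul_distrib]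
  congr 1 with i
  simp [mul_assoc]

lemma prod_single_pow {n : ℕ} (i : Fin n) (z : Fin n → ℝ) :
    ∏ k, (z k) ^ (Pi.single i 2 : Fin n → ℕ) k = (z i) ^ 2 := by
  rw [Finset.prod_eq_single i]
  · simp
  · intro k _ hk; simp [Pi.single_eq_of_ne hk]
  · simp

/-- The central computation: integral of a Gaussian times the square of an affine
function of a diagonal quadratic form. -/
lemma core (n : ℕ) (a : Fin n → ℝ) (c : ℝ) :
    ∫ z : Fin n → ℝ,
        (2*π) ^ (-(n:ℝ)/2) * Real.exp (-(1/2) * (z ⬝ᵥ z)) * (c - (1/2) * ∑ i, a i * (z i)^2)^2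
      = c^2 - c * (∑ i, a i) + (1/4) * ((∑ i, a i)^2 + 2 * ∑ i, (a i)^2) := by
  have key : ∀ z : Fin n → ℝ,
      (2*π) ^ (-(n:ℝ)/2) * Real.exp (-(1/2) * (z ⬝ᵥ z)) * (c - (1/2) * ∑ i, a i * (z i)^2)^2
      = c^2 * HH 0 z - (∑ i, (c * a i) * HH (Pi.single i 2) z)
        + (1/4) * ∑ i, ∑ j, (a i * a j) * HH (Pi.single i 2 + Pi.single j 2) z := by
    intro z
    have h2 : ∀ i, HH (Pi.single i 2) z = HH 0 z * (z i)^2 := by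
      intro i; rw [HH_monomial, prod_single_pow]
    have h4 : ∀ i j, HH (Pi.single i 2 + Pi.single j 2) z = HH 0 z * ((z i)^2 * (z j)^2) := by
      intro i j
      rw [HH_monomial]
      congr 1
      simp only [Pi.add_apply, pow_add]
      rw [Finset.prod_mul_distrib, prod_single_pow, prod_single_pow]
    simp only [h2, h4]
    rw [← HH_zero_eq]
    set h := HH 0 z
    rw [show (∑ i, c * a i * (h * (z i)^2)) = c * h * ∑ i, a i * (z i)^2 by
      rw [Finset.mul_sum]; congr 1 with i; ring]
    rw [show (∑ i, ∑ j, a i * a j * (h * ((z i)^2 * (z j)^2)))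
        = h * (∑ i, a i * (z i)^2) * (∑ j, a j * (z j)^2) by
      rw [show (h * ∑ i, a i * (z i)^2) * (∑ j, a j * (z j)^2)
          = h * ((∑ i, a i * (z i)^2) * (∑ j, a j * (z j)^2)) by ring,
        Finset.sum_mul_sum, Finset.mul_sum]
      refine Finset.sum_congr rfl fun i _ => ?_
      rw [Finset.mul_sum]
      exact Finset.sum_congr rfl fun j _ => by ring]
    ring
  rw [integral_congr_ae (Filter.Eventually.of_forall key)]
  have int2 : Integrable (fun z => ∑ i, (c * a i) * HH (Pi.single i 2) z) :=
    integrable_finset_sum _ fun i _ => (HH_integrable _).const_mul _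
  have int4 : Integrable (fun z => ∑ i, ∑ j, (a i * a j) * HH (Pi.single i 2 + Pi.single j 2) z) :=
    integrable_finset_sum _ fun i _ =>
      integrable_finset_sum _ fun j _ => (HH_integrable _).const_mul _
  have intA : Integrable (fun z : Fin n → ℝ =>
      c^2 * HH 0 z - ∑ i, (c * a i) * HH (Pi.single i 2) z) :=
    ((HH_integrable 0).const_mul _).sub int2
  have intB : Integrable (fun z : Fin n → ℝ =>
      (1/4 : ℝ) * ∑ i, ∑ j, (a i * a j) * HH (Pi.single i 2 + Pi.single j 2) z) :=
    int4.const_mul _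
  rw [integral_add intA intB,
    integral_sub ((HH_integrable 0).const_mul _) int2,
    MeasureTheory.integral_const_mul, MeasureTheory.integral_const_mul,
    integral_finset_sum _ (fun i _ => (HH_integrable _).const_mul _)]
  have hint0 : ∫ z, HH (0 : Fin n → ℕ) z = 1 := by
    rw [HH_integral]; apply Finset.prod_eq_one; intro k _; simpa using g1_mom0
  simp only [MeasureTheory.integral_const_mul]
  have hinner : ∀ i : Fin n,
      (∫ z, ∑ j, (a i * a j) * HH (Pi.single i 2 + Pi.single j 2) z)
        = ∑ j, (a i * a j) * (if i = j then (3:ℝ) else 1) := by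
    intro i
    rw [integral_finset_sum _ (fun j _ => (HH_integrable _).const_mul _)]
    exact Finset.sum_congr rfl fun j _ => by
      rw [MeasureTheory.integral_const_mul, HH_pair]
  rw [integral_finset_sum _ (fun i _ =>
    integrable_finset_sum _ fun j _ => (HH_integrable _).const_mul _)]
  simp only [hinner]
  have hsq : ∑ i, ∑ j, (a i * a j) * (if i = j then (3:ℝ) else 1)
      = (∑ i, a i)^2 + 2 * ∑ i, (a i)^2 := by
    have h1 : ∀ i j : Fin n, a i * a j * (if i = j then (3:ℝ) else 1)
        = a i * a j + (if i = j then 2 * (a i * a j) else 0) := by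
      intro i j; split <;> ring
    simp only [h1, Finset.sum_add_distrib]
    congr 1
    · rw [sq, Finset.sum_mul_sum]
    · simp only [Finset.sum_ite_eq, Finset.mem_univ, if_pos]
      rw [Finset.mul_sum]
      exact Finset.sum_congr rfl fun i _ => by ring
  rw [hsq]
  simp only [hint0, HH_single, mul_one]
  rw [← Finset.mul_sum]

/-! ### Change of variables -/

lemma integral_comp_mulVec {n : ℕ} (A : Matrix (Fin n) (Fin n) ℝ) (hA : A.det ≠ 0)
    (f : (Fin n → ℝ) → ℝ) (hf : Continuous f) :
    ∫ x, f x = |A.det| * ∫ x, f (A *ᵥ x) := by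
  have hdet : LinearMap.det (Matrix.toLin' A) ≠ 0 := by rwa [LinearMap.det_toLin']
  have hmap := Measure.map_linearMap_addHaar_eq_smul_addHaar
    (volume : Measure (Fin n → ℝ)) hdet
  have h1 : ∫ x, f ((Matrix.toLin' A) x) = ∫ y, f y ∂(Measure.map (⇑(Matrix.toLin' A)) volume) := by
    rw [integral_map (Matrix.toLin' A).continuous_of_finiteDimensional.aemeasurable
      hf.aestronglyMeasurable]
  have h2 : ∫ y, f y ∂(Measure.map (⇑(Matrix.toLin' A)) volume)
      = |A.det|⁻¹ * ∫ y, f y := by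
    rw [hmap, integral_smul_measure, LinearMap.det_toLin', ENNReal.toReal_ofReal (abs_nonneg _),
      abs_inv, smul_eq_mul]
  have h3 : ∀ x, (Matrix.toLin' A) x = A *ᵥ x := fun x => Matrix.toLin'_apply A x
  simp only [h3] at h1
  rw [h1, h2, ← mul_assoc, mul_inv_cancel₀ (by simpa using hA), one_mul]

lemma quad_comp {n : ℕ} (C P : Matrix (Fin n) (Fin n) ℝ) (z : Fin n → ℝ) :
    (P *ᵥ z) ⬝ᵥ (C *ᵥ (P *ᵥ z)) = z ⬝ᵥ ((Pᵀ * C * P) *ᵥ z) := by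
  rw [Matrix.mulVec_mulVec, Matrix.dotProduct_mulVec, Matrix.dotProduct_mulVec, mul_assoc]
  conv_rhs => rw [← Matrix.vecMul_vecMul, Matrix.vecMul_transpose]

lemma diag_quad {n : ℕ} (d : Fin n → ℝ) (z : Fin n → ℝ) :
    z ⬝ᵥ (Matrix.diagonal d *ᵥ z) = ∑ i, d i * (z i)^2 := by
  simp only [dotProduct, Matrix.mulVec_diagonal]
  exact Finset.sum_congr rfl fun i _ => by ring

lemma continuous_quadForm {n : ℕ} (A : Matrix (Fin n) (Fin n) ℝ) :
    Continuous fun x : Fin n → ℝ => x ⬝ᵥ (A *ᵥ x) := by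
  simp only [dotProduct, Matrix.mulVec]
  exact continuous_finset_sum _ fun i _ => (continuous_apply i).mul
    (continuous_finset_sum _ fun j _ => continuous_const.mul (continuous_apply j))

lemma gaussianPdf_pos {n : ℕ} (m : Fin n → ℝ) (S : Matrix (Fin n) (Fin n) ℝ)
    (h : 0 < S.det) (x : Fin n → ℝ) : 0 < gaussianPdf m S x := by
  unfold gaussianPdf
  exact mul_pos (mul_pos (Real.rpow_pos_of_pos twoPiPos _) (Real.rpow_pos_of_pos h _))
    (Real.exp_pos _)

lemma log_gaussian_ratio {n : ℕ} (m : Fin n → ℝ) (Sp Sq : Matrix (Fin n) (Fin n) ℝ)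
    (hp : 0 < Sp.det) (hq : 0 < Sq.det) (θ : Fin n → ℝ) :
    Real.log (gaussianPdf m Sp θ / gaussianPdf m Sq θ)
      = (1/2) * (Real.log Sq.det - Real.log Sp.det)
        - (1/2) * ((θ - m) ⬝ᵥ (Sp⁻¹ *ᵥ (θ - m)) - (θ - m) ⬝ᵥ (Sq⁻¹ *ᵥ (θ - m))) := by
  have hA : (0:ℝ) < (2 * π) ^ (-(n:ℝ)/2) := Real.rpow_pos_of_pos twoPiPos _
  have hBp : (0:ℝ) < Sp.det ^ (-(1:ℝ)/2) := Real.rpow_pos_of_pos hp _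
  have hBq : (0:ℝ) < Sq.det ^ (-(1:ℝ)/2) := Real.rpow_pos_of_pos hq _
  unfold gaussianPdf
  rw [Real.log_div (by positivity) (by positivity),
    Real.log_mul (by positivity) (Real.exp_pos _).ne',
    Real.log_mul (by positivity) (Real.exp_pos _).ne',
    Real.log_mul hA.ne' hBp.ne', Real.log_mul hA.ne' hBq.ne',
    Real.log_exp, Real.log_exp, Real.log_rpow hp, Real.log_rpow hq]
  ring

end GaussL2Aux

open GaussL2Aux Real

/-- Closed form of the squared `L²` information pseudometric between two common-mean
Gaussians `p = N(μ, Σ_p)` and `q = N(μ, Σ_q)`: with `M = Σ_q⁻¹ Σ_p`,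
`∫ p |log(p/q)|² = n/2 − tr M + tr(M²)/2 + (1/4)(tr M − log det M − n)²`. -/
theorem gaussian_L2_pseudometric_closed_form
    (n : ℕ) (μ : Fin n → ℝ) (Sp Sq : Matrix (Fin n) (Fin n) ℝ)
    (hSp : Sp.PosDef) (hSq : Sq.PosDef) :
    (∫ θ : Fin n → ℝ,
        gaussianPdf μ Sp θ * |Real.log (gaussianPdf μ Sp θ / gaussianPdf μ Sq θ)| ^ 2) =
      (n : ℝ) / 2 - (Sq⁻¹ * Sp).trace + ((Sq⁻¹ * Sp) ^ 2).trace / 2 +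
        (1 / 4) * ((Sq⁻¹ * Sp).trace - Real.log (Sq⁻¹ * Sp).det - n) ^ 2 := by
  have hdSp := hSp.det_pos
  have hdSq := hSq.det_pos
  -- square root of Sp
  open scoped MatrixOrder in set L := CFC.sqrt Sp with hL
  open scoped MatrixOrder in have hLL : L * L = Sp := CFC.sqrt_mul_sqrt_self Sp hSp.posSemidef.nonneg
  open scoped MatrixOrder in have hLpsd : L.PosSemidef := (CFC.sqrt_nonneg Sp).posSemidef
  have hLher : L.IsHermitian := hLpsd.1
  have hLt : Lᵀ = L := by rw [← Matrix.conjTranspose_eq_transpose_of_trivial]; exact hLher.eq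
  have hLdet_nonneg : 0 ≤ L.det := by
    have h2 : L.det = ∏ i, hLher.eigenvalues i := by simpa using hLher.det_eq_prod_eigenvalues
    rw [h2]
    exact Finset.prod_nonneg fun i _ => hLpsd.eigenvalues_nonneg i
  have hLdet2 : L.det * L.det = Sp.det := by rw [← Matrix.det_mul, hLL]
  have hLdet_pos : 0 < L.det := by
    rcases hLdet_nonneg.lt_or_eq with h | h
    · exact h
    · exfalso; rw [← hLdet2, ← h, mul_zero] at hdSp; exact lt_irrefl _ hdSp
  have hLdetne : IsUnit L.det := isUnit_iff_ne_zero.mpr (ne_of_gt hLdet_pos)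
  have hLinv : L * Sp⁻¹ * L = 1 := by
    rw [← hLL, Matrix.mul_inv_rev]
    calc L * (L⁻¹ * L⁻¹) * L = (L * L⁻¹) * (L⁻¹ * L) := by simp only [mul_assoc]
    _ = 1 := by rw [Matrix.mul_nonsing_inv _ hLdetne, Matrix.nonsing_inv_mul _ hLdetne, one_mul]
  -- B and its spectral decomposition
  set B := L * Sq⁻¹ * L with hBdef
  have hSqinvT : Sq⁻¹ᵀ = Sq⁻¹ := by
    rw [Matrix.transpose_nonsing_inv]
    congr 1
    rw [← Matrix.conjTranspose_eq_transpose_of_trivial]; exact hSq.1.eq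
  have hBher : B.IsHermitian := by
    have : Bᴴ = B := by
      rw [Matrix.conjTranspose_eq_transpose_of_trivial, hBdef, Matrix.transpose_mul,
        Matrix.transpose_mul, hSqinvT, hLt]
      simp only [mul_assoc]
    exact this
  set U : Matrix (Fin n) (Fin n) ℝ := ↑hBher.eigenvectorUnitary with hU
  set d : Fin n → ℝ := hBher.eigenvalues with hd
  have hdiag : star U * B * U = Matrix.diagonal d := by
    have := hBher.conjStarAlgAut_star_eigenvectorUnitary
    simpa using this
  have hUU : star U * U = 1 := by
    have h := hBher.eigenvectorUnitary.2
    rw [Unitary.mem_iff] at h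
    exact h.1
  have hUstar : star U = Uᵀ := by
    rw [← Matrix.conjTranspose_eq_transpose_of_trivial]; rfl
  have hUdet : |U.det| = 1 := by
    have h1 : U.det * U.det = 1 := by
      have := congrArg Matrix.det hUU
      rwa [Matrix.det_mul, hUstar, Matrix.det_transpose, Matrix.det_one] at this
    rcases mul_self_eq_one_iff.mp h1 with h | h <;> simp [h]
  have hspec : B = U * Matrix.diagonal d * star U := by
    have := hBher.spectral_theorem
    simpa using this
  have htraceB : B.trace = ∑ i, d i := by
    rw [hspec, Matrix.trace_mul_comm, ← mul_assoc, hUU, one_mul, Matrix.trace_diagonal]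
  have htraceB2 : (B * B).trace = ∑ i, (d i)^2 := by
    rw [hspec]
    have heq : (U * Matrix.diagonal d * star U) * (U * Matrix.diagonal d * star U)
        = U * (Matrix.diagonal d * Matrix.diagonal d) * star U := by
      simp only [mul_assoc]
      rw [← mul_assoc (star U) U, hUU, one_mul]
    rw [heq, Matrix.trace_mul_comm, ← mul_assoc, hUU, one_mul, Matrix.diagonal_mul_diagonal,
      Matrix.trace_diagonal]
    exact Finset.sum_congr rfl fun i _ => (sq (d i)).symm
  -- the combined substitution matrix
  set P := L * U with hPdef
  have hPt : Pᵀ = star U * L := by rw [hPdef, Matrix.transpose_mul, hLt, ← hUstar]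
  have hQp : Pᵀ * Sp⁻¹ * P = 1 := by
    rw [hPt, hPdef]
    calc star U * L * Sp⁻¹ * (L * U) = star U * (L * Sp⁻¹ * L) * U := by simp only [mul_assoc]
    _ = 1 := by rw [hLinv, mul_one, hUU]
  have hQq : Pᵀ * Sq⁻¹ * P = Matrix.diagonal d := by
    rw [hPt, hPdef]
    calc star U * L * Sq⁻¹ * (L * U) = star U * (L * Sq⁻¹ * L) * U := by simp only [mul_assoc]
    _ = Matrix.diagonal d := by rw [← hBdef]; exact hdiag
  have hPdetabs : |P.det| = L.det := by
    rw [hPdef, Matrix.det_mul, abs_mul, hUdet, mul_one, abs_of_pos hLdet_pos]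
  have hPdetne : P.det ≠ 0 := by
    intro h
    rw [h, abs_zero] at hPdetabs
    exact (ne_of_gt hLdet_pos) hPdetabs.symm
  -- scalar relations
  have hsum_d : ∑ i, d i = (Sq⁻¹ * Sp).trace := by
    rw [← htraceB, hBdef, Matrix.trace_mul_comm (L * Sq⁻¹) L, ← mul_assoc, hLL,
      Matrix.trace_mul_comm]
  have hsum_d2 : ∑ i, (d i)^2 = ((Sq⁻¹ * Sp)^2).trace := by
    rw [← htraceB2]
    have hBB : B * B = L * (Sq⁻¹ * (Sp * (Sq⁻¹ * L))) := by
      rw [hBdef, ← hLL]; simp only [mul_assoc]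
    rw [hBB, Matrix.trace_mul_comm]
    congr 1
    rw [sq]
    simp only [mul_assoc, hLL]
  have hlogdet : Real.log (Sq⁻¹ * Sp).det = Real.log Sp.det - Real.log Sq.det := by
    rw [Matrix.det_mul, Matrix.det_nonsing_inv, Ring.inverse_eq_inv',
      Real.log_mul (inv_ne_zero (ne_of_gt hdSq)) (ne_of_gt hdSp), Real.log_inv]
    ring
  have hSpdet_rpow : Sp.det ^ (-(1:ℝ)/2) = L.det⁻¹ := by
    rw [← hLdet2, ← sq, ← Real.rpow_natCast (L.det) 2, ← Real.rpow_mul hLdet_nonneg]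
    norm_num
    rw [Real.rpow_neg_one]
  set c : ℝ := (1/2) * (Real.log Sq.det - Real.log Sp.det) with hc
  set a : Fin n → ℝ := fun i => 1 - d i with ha
  -- Step 1: rewrite the integrand pointwise
  have hpt : ∀ θ : Fin n → ℝ,
      gaussianPdf μ Sp θ * |Real.log (gaussianPdf μ Sp θ / gaussianPdf μ Sq θ)| ^ 2
        = gaussianPdf μ Sp θ * (c - (1/2) * ((θ - μ) ⬝ᵥ (Sp⁻¹ *ᵥ (θ - μ))
            - (θ - μ) ⬝ᵥ (Sq⁻¹ *ᵥ (θ - μ))))^2 := by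
    intro θ
    rw [sq_abs, log_gaussian_ratio μ Sp Sq hdSp hdSq θ]
  rw [integral_congr_ae (Filter.Eventually.of_forall hpt)]
  -- Step 2: translate by μ
  have step2 : (∫ x : Fin n → ℝ, gaussianPdf μ Sp x * (c - (1/2) * ((x - μ) ⬝ᵥ (Sp⁻¹ *ᵥ (x - μ))
          - (x - μ) ⬝ᵥ (Sq⁻¹ *ᵥ (x - μ))))^2)
      = ∫ x : Fin n → ℝ, gaussianPdf μ Sp (x + μ)
          * (c - (1/2) * (((x + μ) - μ) ⬝ᵥ (Sp⁻¹ *ᵥ ((x + μ) - μ))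
            - ((x + μ) - μ) ⬝ᵥ (Sq⁻¹ *ᵥ ((x + μ) - μ))))^2 :=
    (integral_add_right_eq_self _ μ).symm
  rw [step2]
  -- Step 3: simplify translated integrand
  have hF : ∀ x : Fin n → ℝ, gaussianPdf μ Sp (x + μ)
        * (c - (1/2) * (((x + μ) - μ) ⬝ᵥ (Sp⁻¹ *ᵥ ((x + μ) - μ))
          - ((x + μ) - μ) ⬝ᵥ (Sq⁻¹ *ᵥ ((x + μ) - μ))))^2
      = ((2 * π) ^ (-(n:ℝ)/2) * Sp.det ^ (-(1:ℝ)/2))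
          * (Real.exp (-(1/2) * (x ⬝ᵥ (Sp⁻¹ *ᵥ x)))
            * (c - (1/2) * (x ⬝ᵥ (Sp⁻¹ *ᵥ x) - x ⬝ᵥ (Sq⁻¹ *ᵥ x)))^2) := by
    intro x
    simp only [gaussianPdf, add_sub_cancel_right]
    ring
  rw [integral_congr_ae (Filter.Eventually.of_forall hF)]
  -- Step 4: change of variables x = P z
  have hcont : Continuous fun x : Fin n → ℝ =>
      ((2 * π) ^ (-(n:ℝ)/2) * Sp.det ^ (-(1:ℝ)/2))
        * (Real.exp (-(1/2) * (x ⬝ᵥ (Sp⁻¹ *ᵥ x)))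
          * (c - (1/2) * (x ⬝ᵥ (Sp⁻¹ *ᵥ x) - x ⬝ᵥ (Sq⁻¹ *ᵥ x)))^2) := by
    have h1 : Continuous fun x : Fin n → ℝ => Real.exp (-(1/2) * (x ⬝ᵥ (Sp⁻¹ *ᵥ x))) :=
      Real.continuous_exp.comp (continuous_const.mul (continuous_quadForm Sp⁻¹))
    have h2 : Continuous fun x : Fin n → ℝ =>
        (c - (1/2) * (x ⬝ᵥ (Sp⁻¹ *ᵥ x) - x ⬝ᵥ (Sq⁻¹ *ᵥ x)))^2 :=
      (continuous_const.sub (continuous_const.mul ((continuous_quadForm Sp⁻¹).sub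
        (continuous_quadForm Sq⁻¹)))).pow 2
    exact continuous_const.mul (h1.mul h2)
  rw [integral_comp_mulVec P hPdetne _ hcont, hPdetabs]
  -- Step 5: evaluate the integrand at P z
  have hFP : ∀ z : Fin n → ℝ,
      ((2 * π) ^ (-(n:ℝ)/2) * Sp.det ^ (-(1:ℝ)/2))
        * (Real.exp (-(1/2) * ((P *ᵥ z) ⬝ᵥ (Sp⁻¹ *ᵥ (P *ᵥ z))))
          * (c - (1/2) * ((P *ᵥ z) ⬝ᵥ (Sp⁻¹ *ᵥ (P *ᵥ z))
            - (P *ᵥ z) ⬝ᵥ (Sq⁻¹ *ᵥ (P *ᵥ z))))^2)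
      = Sp.det ^ (-(1:ℝ)/2) * ((2*π) ^ (-(n:ℝ)/2) * Real.exp (-(1/2) * (z ⬝ᵥ z))
          * (c - (1/2) * ∑ i, a i * (z i)^2)^2) := by
    intro z
    have e1 : (P *ᵥ z) ⬝ᵥ (Sp⁻¹ *ᵥ (P *ᵥ z)) = z ⬝ᵥ z := by
      rw [quad_comp, hQp, Matrix.one_mulVec]
    have e2 : (P *ᵥ z) ⬝ᵥ (Sq⁻¹ *ᵥ (P *ᵥ z)) = ∑ i, d i * (z i)^2 := by
      rw [quad_comp, hQq, diag_quad]
    rw [e1, e2]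
    have e3 : z ⬝ᵥ z - ∑ i, d i * (z i)^2 = ∑ i, a i * (z i)^2 := by
      rw [show z ⬝ᵥ z = ∑ i, z i * z i from rfl, ← Finset.sum_sub_distrib]
      exact Finset.sum_congr rfl fun i _ => by simp only [ha]; ring
    rw [e3]
    ring
  rw [integral_congr_ae (Filter.Eventually.of_forall hFP), MeasureTheory.integral_const_mul,
    core n a c, hSpdet_rpow, ← mul_assoc, mul_inv_cancel₀ (ne_of_gt hLdet_pos), one_mul]
  -- Step 6: final algebra
  have haT : ∑ i, a i = (n : ℝ) - (Sq⁻¹ * Sp).trace := by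
    simp only [ha]
    rw [Finset.sum_sub_distrib, Finset.sum_const, Finset.card_univ, Fintype.card_fin,
      nsmul_eq_mul, mul_one, hsum_d]
  have haS : ∑ i, (a i)^2 = (n : ℝ) - 2 * (Sq⁻¹ * Sp).trace + ((Sq⁻¹ * Sp)^2).trace := by
    have h1 : ∀ i, (a i)^2 = 1 - 2 * d i + (d i)^2 := fun i => by simp only [ha]; ring
    simp only [h1]
    rw [Finset.sum_add_distrib, Finset.sum_sub_distrib, Finset.sum_const, Finset.card_univ,
      Fintype.card_fin, nsmul_eq_mul, mul_one, ← Finset.mul_sum, hsum_d, hsum_d2]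
  rw [haT, haS, hlogdet, hc]
  ring
end
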